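/- Let F : C → D be a functor preserving finite products between categories with finite products carrying pointed endofunctors (◇^C, p^C) and (◇^D, p^D), such that ◇^D ∘ F = F ∘ ◇^C and p^D_{FX} = F(p^C_X) for all X. Suppose C and D carry guarded Conway operators †_C and †_D and F preserves daggers: F(f^{†_C}) = (F''f)^{†_D} for every f : ◇^C X × A → X, where F''f is Ff precomposed with the canonical product-comparison isomorphism ◇^D FX × FA ≅ F(◇^C X × A). Then F preserves the induced trace operators: F(Tr_{†_C}^X_{A,B}(f)) = Tr_{†_D}^{FX}_{FA,FB}(F'f) for every f : ◇^C X × A → X × B, where Tr_†^X_{A,B}(f) = π_r ∘ f ∘ (p_X × id_A) ∘ ⟨(π_ℓ ∘ f)†, id_A⟩ and F'f denotes Ff conjugated by the canonical isomorphisms ◇^D FX × FA ≅ F(◇^C X × A) and F(X × B) ≅ FX × FB. -/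

import Mathlib

open CategoryTheory CategoryTheory.Limits

universe v u v' u'

/-- A guarded Conway category structure: a guarded fixpoint operator `dag` satisfying the
fixpoint, parameter, (simplified) composition and double dagger identities. -/
structure IsGuardedConway {C : Type u} [Category.{v} C] [HasFiniteProducts C]
    (D : C ⥤ C) (p : 𝟭 C ⟶ D)
    (dag : ∀ {X Y : C}, (D.obj X ⨯ Y ⟶ X) → (Y ⟶ X)) : Prop where
  fix : ∀ {X Y : C} (f : D.obj X ⨯ Y ⟶ X),
      dag f = prod.lift (dag f) (𝟙 Y) ≫ prod.map (p.app X) (𝟙 Y) ≫ f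
  param : ∀ {X Y Z : C} (f : D.obj X ⨯ Y ⟶ X) (h : Z ⟶ Y),
      dag (prod.map (𝟙 (D.obj X)) h ≫ f) = h ≫ dag f
  comp : ∀ {X Y Z : C} (f : D.obj X ⨯ Y ⟶ Z) (g : Z ⟶ X),
      dag (f ≫ g) = dag (prod.map (D.map g) (𝟙 Y) ≫ f) ≫ g
  ddag : ∀ {X Y : C} (f : D.obj X ⨯ (D.obj X ⨯ Y) ⟶ X),
      dag (dag f) = dag (prod.lift prod.fst (𝟙 (D.obj X ⨯ Y)) ≫ f)

/-- **Dagger-preserving functors preserve the induced traces.**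
Let `F : C ⥤ D` preserve finite products, commute strictly with the delays
(`F ⋙ ◇ᴰ = ◇ᶜ ⋙ F` and `pᴰ_{FX} = F pᶜ_X`), and preserve the guarded Conway operators
(up to the canonical product comparison isomorphisms).  Then `F` preserves the traces
induced by the daggers, `Tr_† f = π_r ∘ f ∘ (p_X × id_A) ∘ ⟨(π_ℓ ∘ f)†, id_A⟩`. -/
theorem daggerPreserving_preserves_trace
    {C : Type u} [Category.{v} C] [HasFiniteProducts C]
    {D : Type u'} [Category.{v'} D] [HasFiniteProducts D]
    (DC : C ⥤ C) (pC : 𝟭 C ⟶ DC) (DD : D ⥤ D) (pD : 𝟭 D ⟶ DD)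
    (dagC : ∀ {X Y : C}, (DC.obj X ⨯ Y ⟶ X) → (Y ⟶ X))
    (dagD : ∀ {X Y : D}, (DD.obj X ⨯ Y ⟶ X) → (Y ⟶ X))
    (hdagC : IsGuardedConway DC pC @dagC) (hdagD : IsGuardedConway DD pD @dagD)
    (F : C ⥤ D) [PreservesFiniteProducts F]
    -- `F` commutes strictly with the delays ...
    (heq : F ⋙ DD = DC ⋙ F)
    -- ... and with the points
    (hp : ∀ X : C,
      pD.app (F.obj X) ≫ eqToHom (Functor.congr_obj heq X) = F.map (pC.app X))
    -- `F` preserves the daggers (up to the canonical comparison isomorphism)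
    (hdag : ∀ {X A : C} (f : DC.obj X ⨯ A ⟶ X),
      F.map (dagC f) =
        dagD (prod.map (eqToHom (Functor.congr_obj heq X)) (𝟙 (F.obj A)) ≫
              inv (prodComparison F (DC.obj X) A) ≫ F.map f)) :
    -- then `F` preserves the induced traces
    ∀ {X A B : C} (f : DC.obj X ⨯ A ⟶ X ⨯ B),
      F.map (prod.lift (dagC (f ≫ prod.fst)) (𝟙 A) ≫
          prod.map (pC.app X) (𝟙 A) ≫ f ≫ prod.snd) =
        prod.lift
            (dagD ((prod.map (eqToHom (Functor.congr_obj heq X)) (𝟙 (F.obj A)) ≫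
              inv (prodComparison F (DC.obj X) A) ≫ F.map f ≫ prodComparison F X B) ≫
                prod.fst))
            (𝟙 (F.obj A)) ≫
          prod.map (pD.app (F.obj X)) (𝟙 (F.obj A)) ≫
          (prod.map (eqToHom (Functor.congr_obj heq X)) (𝟙 (F.obj A)) ≫
            inv (prodComparison F (DC.obj X) A) ≫ F.map f ≫ prodComparison F X B) ≫
          prod.snd := by
  intro X A B f
  have key : dagD ((prod.map (eqToHom (Functor.congr_obj heq X)) (𝟙 (F.obj A)) ≫
        inv (prodComparison F (DC.obj X) A) ≫ F.map f ≫ prodComparison F X B) ≫ prod.fst)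
      = F.map (dagC (f ≫ prod.fst)) := by
    rw [hdag (f ≫ prod.fst)]
    congr 1
    rw [F.map_comp, ← prodComparison_fst F X B]
    simp
  rw [key]
  have hl : F.map (prod.lift (dagC (f ≫ prod.fst)) (𝟙 A))
      = prod.lift (F.map (dagC (f ≫ prod.fst))) (𝟙 (F.obj A)) ≫ inv (prodComparison F X A) := by
    rw [IsIso.eq_comp_inv]
    ext <;> simp [prodComparison_fst, prodComparison_snd, ← F.map_comp, -Functor.map_comp, prod.lift_fst, prod.lift_snd]
  have hm := prodComparison_inv_natural F (pC.app X) (𝟙 A)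
  have hm' := reassoc_of% hm
  have hpm : prod.map (pD.app (F.obj X)) (𝟙 (F.obj A)) ≫
      prod.map (eqToHom (Functor.congr_obj heq X)) (𝟙 (F.obj A))
      = prod.map (F.map (pC.app X)) (𝟙 (F.obj A)) := by
    rw [prod.map_map, hp, Category.comp_id]
  rw [F.map_comp, F.map_comp, F.map_comp, hl, ← prodComparison_snd F X B]
  simp only [Category.assoc, hm', F.map_id]
  rw [← hpm]
  simp only [Category.assoc]
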